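/- arXiv:math/9812161 — 2 statements merged into one kernel-verified Lean document; each statement's English description precedes it below -/
import Mathlib

section
/- Let ℓ be a positive integer, N = ℓ(ℓ+1)/2, τ ∈ ℂ with Im τ > 0, and η ∈ ℂ with θ1(2nη) ≠ 0 for all integers 1 ≤ n ≤ 2ℓ. Then the coefficients C_j^{(ℓ)} satisfy the symmetry C_j^{(ℓ)} = C_{N−j}^{(ℓ)} for all 0 ≤ j ≤ N. -/
open Complex Finset

/-- Jacobi theta function θ₁(x|τ). -/
noncomputable def theta1 (τ x : ℂ) : ℂ :=
  ∑' k : ℤ, Complex.exp ((Real.pi : ℂ) * Complex.I * τ * ((k : ℂ) + 1/2)^2 +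
    2 * (Real.pi : ℂ) * Complex.I * (x + 1/2) * ((k : ℂ) + 1/2))

/-- Elliptic number [n] = θ₁(2nη). -/
noncomputable def en (τ η : ℂ) (n : ℤ) : ℂ := theta1 τ (2 * (n : ℂ) * η)

/-- Elliptic factorial [n]! = ∏_{j=1}^n [j]. -/
noncomputable def efact (τ η : ℂ) (n : ℕ) : ℂ := ∏ j ∈ Finset.range n, en τ η ((j : ℤ) + 1)

/-- Elliptic binomial coefficient [n over m]. -/
noncomputable def ebinom (τ η : ℂ) (n m : ℕ) : ℂ :=
  efact τ η n / (efact τ η m * efact τ η (n - m))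

/-- Φ(x,ζ) = θ₁(ζ+x)/(θ₁(x)θ₁(ζ)). -/
noncomputable def Phi (τ x ζ : ℂ) : ℂ := theta1 τ (ζ + x) / (theta1 τ x * theta1 τ ζ)

/-- The polynomials A_{(ℓ−s)η}(E), indexed by s = 0, 1, …, ℓ;
`Apoly τ η ℓ E s = A_{(ℓ−s)η}(E)`. -/
noncomputable def Apoly (τ η : ℂ) (ℓ : ℕ) (E : ℂ) : ℕ → ℂ
  | 0 => 1
  | 1 => en τ η (ℓ : ℤ) / en τ η (2 * (ℓ : ℤ)) * E
  | (s + 2) =>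
      en τ η ((ℓ : ℤ) - (s + 1)) / en τ η (2 * (ℓ : ℤ) - (s + 1)) * E *
        Apoly τ η ℓ E (s + 1)
      + en τ η ((s : ℤ) + 1) / en τ η (2 * (ℓ : ℤ) - (s + 1)) * Apoly τ η ℓ E s

/-- The coefficient A_k(x,λ) of the commuting difference operator A_λ. -/
noncomputable def Acoef (τ η : ℂ) (ℓ : ℕ) (k : ℕ) (x lam : ℂ) : ℂ :=
  (-1 : ℂ)^k * (efact τ η ℓ / efact τ η (2*ℓ)) * ebinom τ η ℓ k *
  (∏ j ∈ Finset.range (ℓ - k),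
     theta1 τ (2*x + 2*((ℓ : ℂ) - (j : ℂ))*η) * theta1 τ (2*lam + 2*((ℓ : ℂ) - (j : ℂ))*η) /
       theta1 τ (2*x + 2*lam + 2*((k : ℂ) - (j : ℂ))*η)) *
  (∏ j ∈ Finset.range k,
     theta1 τ (2*x - 2*((ℓ : ℂ) - (j : ℂ))*η) * theta1 τ (2*lam - 2*((ℓ : ℂ) - (j : ℂ))*η) /
       theta1 τ (2*x + 2*lam + 2*((k : ℂ) + (j : ℂ) - (ℓ : ℂ))*η))

/-- The difference operator A_λ acting on functions: (A_λ f)(x) = Σ_k A_k(x,λ) f(x+(2k−ℓ)η+λ). -/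
noncomputable def Aop (τ η : ℂ) (ℓ : ℕ) (lam : ℂ) (f : ℂ → ℂ) (x : ℂ) : ℂ :=
  ∑ k ∈ Finset.range (ℓ + 1), Acoef τ η ℓ k x lam * f (x + (2*(k : ℂ) - (ℓ : ℂ))*η + lam)

/-- All theta-denominators occurring in the coefficients A_k(x,λ) are nonzero. -/
def domAcoef (τ η : ℂ) (ℓ : ℕ) (x lam : ℂ) : Prop :=
  ∀ k ∈ Finset.range (ℓ + 1),
    (∀ j ∈ Finset.range (ℓ - k), theta1 τ (2*x + 2*lam + 2*((k : ℂ) - (j : ℂ))*η) ≠ 0) ∧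
    (∀ j ∈ Finset.range k, theta1 τ (2*x + 2*lam + 2*((k : ℂ) + (j : ℂ) - (ℓ : ℂ))*η) ≠ 0)

/-- The space Θ⁺_{4ℓ} of even theta functions of order 4ℓ. -/
def ThetaPlus (τ : ℂ) (ℓ : ℕ) (F : ℂ → ℂ) : Prop :=
  Differentiable ℂ F ∧
  (∀ x, F (x + 1) = F x) ∧
  (∀ x, F (x + τ) = Complex.exp (-4*(Real.pi : ℂ)*Complex.I*(ℓ : ℂ)*τ
      - 8*(Real.pi : ℂ)*Complex.I*(ℓ : ℂ)*x) * F x) ∧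
  (∀ x, F (-x) = F x)

/-- The coefficient C_j^{(ℓ)}(η) of the spectral curve equation (Proposition 3.1). -/
noncomputable def Ccoef (τ η : ℂ) (ℓ j : ℕ) : ℂ :=
  ∑ J ∈ (Finset.Icc 1 ℓ).powerset.filter (fun J => J.sum id = j),
    (-1 : ℂ)^(J.card * ℓ + J.card * (J.card - 1) / 2 + j) *
    ∏ k ∈ J, ∏ k' ∈ Finset.Icc 1 ℓ \ J,
      en τ η ((k : ℤ) + (k' : ℤ)) / en τ η ((k : ℤ) - (k' : ℤ))

lemma theta1_neg (τ x : ℂ) : theta1 τ (-x) = -theta1 τ x := by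
  have key : ∀ k : ℤ,
      Complex.exp ((Real.pi : ℂ) * Complex.I * τ * ((k : ℂ) + 1/2)^2 +
        2 * (Real.pi : ℂ) * Complex.I * (-x + 1/2) * ((k : ℂ) + 1/2))
      = -Complex.exp ((Real.pi : ℂ) * Complex.I * τ * (((-1 - k : ℤ) : ℂ) + 1/2)^2 +
        2 * (Real.pi : ℂ) * Complex.I * (x + 1/2) * (((-1 - k : ℤ) : ℂ) + 1/2)) := by
    intro k
    have h1 : (Real.pi : ℂ) * Complex.I * τ * ((k : ℂ) + 1/2)^2 +
        2 * (Real.pi : ℂ) * Complex.I * (-x + 1/2) * ((k : ℂ) + 1/2)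
      = ((Real.pi : ℂ) * Complex.I * τ * (((-1 - k : ℤ) : ℂ) + 1/2)^2 +
        2 * (Real.pi : ℂ) * Complex.I * (x + 1/2) * (((-1 - k : ℤ) : ℂ) + 1/2))
        + ((k : ℂ) * (2 * (Real.pi : ℂ) * Complex.I) + (Real.pi : ℂ) * Complex.I) := by
      push_cast; ring
    rw [h1, Complex.exp_add, Complex.exp_add, Complex.exp_add,
      Complex.exp_int_mul_two_pi_mul_I, Complex.exp_pi_mul_I]
    ring
  rw [theta1, theta1, ← tsum_neg,
    ← Equiv.tsum_eq (Equiv.subLeft (-1 : ℤ))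
      (fun k : ℤ => -Complex.exp ((Real.pi : ℂ) * Complex.I * τ * ((k : ℂ) + 1/2)^2 +
        2 * (Real.pi : ℂ) * Complex.I * (x + 1/2) * ((k : ℂ) + 1/2)))]
  exact tsum_congr fun k => by simpa [Equiv.subLeft, sub_eq_add_neg] using key k

lemma en_neg (τ η : ℂ) (n : ℤ) : en τ η (-n) = -en τ η n := by
  rw [en, en, show (2 : ℂ) * ((-n : ℤ) : ℂ) * η = -(2 * (n : ℂ) * η) by push_cast; ring,
    theta1_neg]

lemma neg_one_pow_eq_of_even_add {m n : ℕ} (h : Even (m + n)) : ((-1 : ℂ))^m = (-1)^n := by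
  have h1 : ((-1 : ℂ))^m * (-1)^n = 1 := by
    rw [← pow_add]; exact h.neg_one_pow
  calc ((-1 : ℂ))^m = (-1)^m * ((-1)^n * (-1)^n) := by
        rw [← pow_add, ← two_mul, pow_mul]; norm_num
  _ = ((-1)^m * (-1)^n) * (-1)^n := by ring
  _ = (-1)^n := by rw [h1, one_mul]

lemma sum_Icc_id' (ℓ : ℕ) : (Finset.Icc 1 ℓ).sum id = ℓ*(ℓ+1)/2 := by
  induction ℓ with
  | zero => simp
  | succ n ih =>
      rw [Finset.sum_Icc_succ_top (by omega), ih]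
      have h : (n+1)*(n+1+1) = n*(n+1) + 2*(n+1) := by ring
      simp only [id]
      omega

lemma prod_neg_c {α : Type*} (s : Finset α) (f : α → ℂ) :
    ∏ i ∈ s, (-(f i)) = (-1 : ℂ)^s.card * ∏ i ∈ s, f i := by
  rw [← Finset.prod_const, ← Finset.prod_mul_distrib]
  exact Finset.prod_congr rfl fun i _ => (neg_one_mul (f i)).symm

lemma half_tri (c : ℕ) : 2*(c*(c-1)/2) + c = c*c := by
  have hce : Even (c*(c-1)) := by
    rcases c with _ | m
    · simp
    · simpa [Nat.succ_sub_one, Nat.mul_comm] using Nat.even_mul_succ_self m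
  have hp : 2*(c*(c-1)/2) = c*(c-1) := Nat.mul_div_cancel' hce.two_dvd
  rw [hp]
  rcases c with _ | m
  · simp
  · simp only [Nat.succ_sub_one]
    ring

/-- Proposition 3.1: the symmetry C_j^{(ℓ)} = C_{N−j}^{(ℓ)}. -/
theorem Ccoef_symmetry
    (τ : ℂ) (hτ : 0 < τ.im) (ℓ : ℕ) (hℓ : 0 < ℓ) (N : ℕ) (hN : N = ℓ*(ℓ+1)/2) (η : ℂ)
    (hη : ∀ n : ℕ, 1 ≤ n → n ≤ 2*ℓ → theta1 τ (2*(n : ℂ)*η) ≠ 0) :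
    ∀ j : ℕ, j ≤ N → Ccoef τ η ℓ j = Ccoef τ η ℓ (N - j) := by
  intro j hj
  have hsum : (Finset.Icc 1 ℓ).sum id = N := by rw [hN]; exact sum_Icc_id' ℓ
  unfold Ccoef
  refine Finset.sum_nbij' (fun J => Finset.Icc 1 ℓ \ J) (fun J => Finset.Icc 1 ℓ \ J)
    ?_ ?_ ?_ ?_ ?_
  · intro J hJ
    rw [Finset.mem_filter, Finset.mem_powerset] at hJ
    rw [Finset.mem_filter, Finset.mem_powerset]
    have hs : (Finset.Icc 1 ℓ \ J).sum id + J.sum id = (Finset.Icc 1 ℓ).sum id :=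
      Finset.sum_sdiff hJ.1
    refine ⟨Finset.sdiff_subset, ?_⟩
    show (Finset.Icc 1 ℓ \ J).sum id = N - j
    have := hJ.2; omega
  · intro J hJ
    rw [Finset.mem_filter, Finset.mem_powerset] at hJ
    rw [Finset.mem_filter, Finset.mem_powerset]
    have hs : (Finset.Icc 1 ℓ \ J).sum id + J.sum id = (Finset.Icc 1 ℓ).sum id :=
      Finset.sum_sdiff hJ.1
    refine ⟨Finset.sdiff_subset, ?_⟩
    show (Finset.Icc 1 ℓ \ J).sum id = j
    have := hJ.2; omega
  · intro J hJ
    rw [Finset.mem_filter, Finset.mem_powerset] at hJ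
    exact Finset.sdiff_sdiff_eq_self hJ.1
  · intro J hJ
    rw [Finset.mem_filter, Finset.mem_powerset] at hJ
    exact Finset.sdiff_sdiff_eq_self hJ.1
  · intro J hJ
    rw [Finset.mem_filter, Finset.mem_powerset] at hJ
    obtain ⟨hJsub, hJsum⟩ := hJ
    have hDD : Finset.Icc 1 ℓ \ (Finset.Icc 1 ℓ \ J) = J := Finset.sdiff_sdiff_eq_self hJsub
    set D := Finset.Icc 1 ℓ \ J with hD
    set c := J.card with hc
    have hcard : D.card = ℓ - c := by
      rw [hD, Finset.card_sdiff_of_subset hJsub, Nat.card_Icc]; omega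
    set d := D.card with hd
    show _ = (-1 : ℂ)^(d * ℓ + d * (d - 1) / 2 + (N - j)) *
      ∏ k ∈ D, ∏ k' ∈ Finset.Icc 1 ℓ \ D,
        en τ η ((k : ℤ) + (k' : ℤ)) / en τ η ((k : ℤ) - (k' : ℤ))
    rw [hDD]
    have hprod : (∏ k ∈ D, ∏ k' ∈ J,
        en τ η ((k : ℤ) + (k' : ℤ)) / en τ η ((k : ℤ) - (k' : ℤ)))
        = (-1 : ℂ)^(d*c) * ∏ k ∈ J, ∏ k' ∈ D,
          en τ η ((k : ℤ) + (k' : ℤ)) / en τ η ((k : ℤ) - (k' : ℤ)) := by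
      calc (∏ k ∈ D, ∏ k' ∈ J,
            en τ η ((k : ℤ) + (k' : ℤ)) / en τ η ((k : ℤ) - (k' : ℤ)))
          = ∏ k ∈ D, ∏ k' ∈ J,
            -(en τ η ((k' : ℤ) + (k : ℤ)) / en τ η ((k' : ℤ) - (k : ℤ))) := by
            refine Finset.prod_congr rfl fun k _ => Finset.prod_congr rfl fun k' _ => ?_
            rw [show (k : ℤ) - (k' : ℤ) = -((k' : ℤ) - (k : ℤ)) by ring, en_neg, div_neg,
              show (k : ℤ) + (k' : ℤ) = (k' : ℤ) + (k : ℤ) by ring]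
        _ = ∏ k ∈ D, ((-1 : ℂ)^c *
            ∏ k' ∈ J, en τ η ((k' : ℤ) + (k : ℤ)) / en τ η ((k' : ℤ) - (k : ℤ))) :=
            Finset.prod_congr rfl fun k _ => prod_neg_c _ _
        _ = (-1 : ℂ)^(d*c) * ∏ k ∈ D, ∏ k' ∈ J,
            en τ η ((k' : ℤ) + (k : ℤ)) / en τ η ((k' : ℤ) - (k : ℤ)) := by
            rw [Finset.prod_mul_distrib, Finset.prod_const, ← pow_mul, mul_comm c d]
        _ = (-1 : ℂ)^(d*c) * ∏ k ∈ J, ∏ k' ∈ D,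
            en τ η ((k : ℤ) + (k' : ℤ)) / en τ η ((k : ℤ) - (k' : ℤ)) := by
            rw [Finset.prod_comm]
    rw [hprod, ← mul_assoc, ← pow_add]
    congr 1
    refine neg_one_pow_eq_of_even_add ?_
    have hcl : c ≤ ℓ := by
      have := Finset.card_le_card hJsub
      simpa [Nat.card_Icc] using this
    have h2N : 2*N = ℓ*(ℓ+1) := by
      rw [hN]
      have : 2 ∣ ℓ*(ℓ+1) := (Nat.even_mul_succ_self ℓ).two_dvd
      omega
    have hc2 := half_tri c
    have hd2 := half_tri d
    have hcd : c + d = ℓ := by omega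
    have h1 : c * ℓ + d * ℓ = ℓ * ℓ := by rw [← Nat.add_mul, hcd]
    have h2 : ℓ * ℓ = c * c + 2 * (d * c) + d * d := by rw [← hcd]; ring
    have h3 : ℓ * (ℓ + 1) = ℓ * ℓ + ℓ := by ring
    have key : (c * ℓ + c * (c - 1) / 2 + j) +
        (d * ℓ + d * (d - 1) / 2 + (N - j) + d * c) = 2*(ℓ*ℓ) := by omega
    exact ⟨ℓ*ℓ, by omega⟩
end

section
/- Let ℓ be a positive integer, τ ∈ ℂ with Im τ > 0, and η ∈ ℂ with θ1(2nη) ≠ 0 for all integers 1 ≤ n ≤ 2ℓ. Then for every integer 0 ≤ s ≤ ℓ and every E ∈ ℂ, A_{(ℓ−s)η}(E) = ([ℓ over s]/[2ℓ over s]) · det( E δ_{ij} + (θ1(−2iη)/θ1(2(ℓ+1−i)η)) δ_{i,j−1} + (θ1(2(2ℓ+2−i)η)/θ1(2(ℓ+1−i)η)) δ_{i,j+1} )_{1≤i,j≤s}, where the empty (0×0) determinant equals 1. -/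
open Complex Finset

lemma theta1_odd (τ x : ℂ) : theta1 τ (-x) = - theta1 τ x := by
  unfold theta1
  rw [← tsum_neg]
  have e : ℤ ≃ ℤ := Equiv.trans (Equiv.neg ℤ) (Equiv.addRight (-1 : ℤ))
  rw [← Equiv.tsum_eq (Equiv.trans (Equiv.neg ℤ) (Equiv.addRight (-1 : ℤ)))]
  refine tsum_congr fun k => ?_
  simp only [Equiv.trans_apply, Equiv.neg_apply, Equiv.coe_addRight]
  have hcast : ((( -k + -1 : ℤ) : ℂ)) = -(k:ℂ) - 1 := by push_cast; ring
  rw [hcast]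
  have key : (Real.pi : ℂ) * Complex.I * τ * (-(k:ℂ) - 1 + 1/2)^2 +
      2 * (Real.pi : ℂ) * Complex.I * (-x + 1/2) * (-(k:ℂ) - 1 + 1/2)
      = ((Real.pi : ℂ) * Complex.I * τ * ((k:ℂ) + 1/2)^2 +
        2 * (Real.pi : ℂ) * Complex.I * (x + 1/2) * ((k:ℂ) + 1/2))
        + (((-k - 1 : ℤ) : ℂ) * (2 * (Real.pi:ℂ) * Complex.I)) + (Real.pi:ℂ) * Complex.I := by
    push_cast; ring
  rw [key, Complex.exp_add, Complex.exp_add, Complex.exp_int_mul_two_pi_mul_I,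
    Complex.exp_pi_mul_I]
  ring

noncomputable def triM (a b c : ℕ → ℂ) (n : ℕ) : Matrix (Fin n) (Fin n) ℂ :=
  Matrix.of fun i j => a (i : ℕ) * (if i = j then 1 else 0)
    + b (i : ℕ) * (if (j : ℕ) = (i : ℕ) + 1 then 1 else 0)
    + c (i : ℕ) * (if (i : ℕ) = (j : ℕ) + 1 then 1 else 0)

lemma triM_det_zero (a b c : ℕ → ℂ) : (triM a b c 0).det = 1 := Matrix.det_fin_zero

lemma triM_det_one (a b c : ℕ → ℂ) : (triM a b c 1).det = a 0 := by
  rw [Matrix.det_fin_one]; simp [triM]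

lemma triM_entry_ext (a b c : ℕ → ℂ) (n m : ℕ) (i j : Fin n) (i' j' : Fin m)
    (hi : (i : ℕ) = (i' : ℕ)) (hj : (j : ℕ) = (j' : ℕ)) :
    triM a b c n i j = triM a b c m i' j' := by
  simp only [triM, Matrix.of_apply, hi, hj, Fin.ext_iff]

lemma triM_det_rec (a b c : ℕ → ℂ) (n : ℕ) :
    (triM a b c (n+2)).det
      = a (n+1) * (triM a b c (n+1)).det - c (n+1) * b n * (triM a b c n).det := by
  rw [Matrix.det_succ_row (triM a b c (n+2)) (Fin.last (n+1))]
  rw [Fin.sum_univ_castSucc, Fin.sum_univ_castSucc]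
  have hz : ∀ j : Fin n,
      (-1 : ℂ) ^ ((Fin.last (n+1) : ℕ) + ((j.castSucc.castSucc : Fin (n+2)) : ℕ)) *
        triM a b c (n+2) (Fin.last (n+1)) j.castSucc.castSucc *
        ((triM a b c (n+2)).submatrix (Fin.last (n+1)).succAbove
          (j.castSucc.castSucc).succAbove).det = 0 := by
    intro j
    have hj : (j : ℕ) < n := j.isLt
    have : triM a b c (n+2) (Fin.last (n+1)) j.castSucc.castSucc = 0 := by
      simp only [triM, Matrix.of_apply, Fin.coe_castSucc, Fin.val_last]
      rw [if_neg (by intro h; exact absurd (congrArg Fin.val h) (by simp; omega)),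
        if_neg (by omega), if_neg (by omega)]
      ring
    rw [this]; ring
  rw [Finset.sum_eq_zero (fun j _ => hz j), zero_add]
  -- entries
  have hlastentry : triM a b c (n+2) (Fin.last (n+1)) (Fin.last (n+1)) = a (n+1) := by
    simp [triM]
  have hsubentry : triM a b c (n+2) (Fin.last (n+1)) ((Fin.last n).castSucc) = c (n+1) := by
    simp [triM, Fin.ext_iff]; exact fun h => absurd h (by omega)
  -- the last minor equals triM (n+1)
  have hminor_last : (triM a b c (n+2)).submatrix (Fin.last (n+1)).succAbove
      (Fin.last (n+1)).succAbove = triM a b c (n+1) := by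
    ext i j
    rw [Fin.succAbove_last, Matrix.submatrix_apply]
    exact triM_entry_ext a b c _ _ _ _ i j (by simp) (by simp)
  -- the other minor
  have hminor_sub : ((triM a b c (n+2)).submatrix (Fin.last (n+1)).succAbove
      (Fin.last n).castSucc.succAbove).det = b n * (triM a b c n).det := by
    set M1 := (triM a b c (n+2)).submatrix (Fin.last (n+1)).succAbove
      (Fin.last n).castSucc.succAbove with hM1
    rw [Matrix.det_succ_column M1 (Fin.last n), Fin.sum_univ_castSucc]
    have hcol : ∀ i : Fin (n+1), M1 i (Fin.last n)
        = triM a b c (n+2) i.castSucc (Fin.last (n+1)) := by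
      intro i
      rw [hM1, Matrix.submatrix_apply, Fin.succAbove_last]
      congr 1
      rw [Fin.succAbove_of_le_castSucc]
      · rfl
      · rw [Fin.le_castSucc_iff]
        exact Fin.lt_iff_val_lt_val.mpr (by simp)
    have hz2 : ∀ i : Fin n,
        (-1 : ℂ) ^ (((i.castSucc : Fin (n+1)) : ℕ) + ((Fin.last n : Fin (n+1)) : ℕ)) *
          M1 i.castSucc (Fin.last n) *
          (M1.submatrix (i.castSucc).succAbove (Fin.last n).succAbove).det = 0 := by
      intro i
      have : M1 i.castSucc (Fin.last n) = 0 := by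
        rw [hcol]
        simp only [triM, Matrix.of_apply, Fin.coe_castSucc, Fin.val_last]
        rw [if_neg (by intro h; exact absurd (congrArg Fin.val h) (by simp; omega)),
          if_neg (by have := i.isLt; omega), if_neg (by have := i.isLt; omega)]
        ring
      rw [this]; ring
    rw [Finset.sum_eq_zero (fun i _ => hz2 i), zero_add]
    have hent : M1 (Fin.last n) (Fin.last n) = b n := by
      rw [hcol]
      simp [triM, Fin.ext_iff]; exact fun h => absurd h (by omega)
    have hmin2 : M1.submatrix (Fin.last n).succAbove (Fin.last n).succAbove = triM a b c n := by
      ext i j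
      rw [Fin.succAbove_last, Matrix.submatrix_apply, hM1, Matrix.submatrix_apply,
        Fin.succAbove_last]
      have hsa : (Fin.last n).castSucc.succAbove j.castSucc
          = (j.castSucc.castSucc : Fin (n+2)) := by
        rw [Fin.succAbove_of_castSucc_lt]
        exact Fin.lt_iff_val_lt_val.mpr (by simp [j.isLt])
      rw [hsa]
      exact triM_entry_ext a b c _ _ _ _ i j (by simp) (by simp)
    rw [hent, hmin2]
    simp
  rw [hlastentry, hsubentry, hminor_last, hminor_sub]
  have h1 : (-1 : ℂ) ^ ((Fin.last (n+1) : ℕ) + ((Fin.last n).castSucc : ℕ))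
      = -1 := by
    simp only [Fin.val_last, Fin.coe_castSucc]
    exact Odd.neg_one_pow ⟨n, by ring⟩
  have h2 : (-1 : ℂ) ^ ((Fin.last (n+1) : ℕ) + ((Fin.last (n+1) : Fin (n+2)) : ℕ)) = 1 := by
    simp only [Fin.val_last]
    exact Even.neg_one_pow ⟨n+1, by ring⟩
  rw [h1, h2]
  ring

/-- `NN τ η k = [k]` for natural `k`. -/
noncomputable def NN (τ η : ℂ) (k : ℕ) : ℂ := theta1 τ (2*(k:ℂ)*η)

lemma efact_succ (τ η : ℂ) (n : ℕ) : efact τ η (n+1) = efact τ η n * NN τ η (n+1) := by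
  rw [efact, Finset.prod_range_succ, ← efact]
  unfold en NN
  norm_cast

lemma efact_eq_prod (τ η : ℂ) (m : ℕ) : ∀ s, s ≤ m →
    efact τ η m = efact τ η (m - s) * ∏ j ∈ Finset.range s, NN τ η (m - j) := by
  intro s
  induction s with
  | zero => simp
  | succ s ih =>
    intro hs
    rw [ih (by omega), Finset.prod_range_succ]
    have h1 : m - s = (m - (s+1)) + 1 := by omega
    rw [h1, efact_succ]
    have h2 : m - (s+1) + 1 = m - s := by omega
    rw [h2]
    ring

lemma efact_ne (τ η : ℂ) (ℓ : ℕ) (hη : ∀ n : ℕ, 1 ≤ n → n ≤ 2*ℓ → NN τ η n ≠ 0)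
    (n : ℕ) (hn : n ≤ 2*ℓ) : efact τ η n ≠ 0 := by
  unfold efact
  refine Finset.prod_ne_zero_iff.mpr fun j hj => ?_
  have hj' : j < n := Finset.mem_range.mp hj
  have hcast : en τ η ((j:ℤ)+1) = NN τ η (j+1) := by
    unfold en NN; norm_cast
  rw [hcast]
  exact hη (j+1) (by omega) (by omega)

lemma ebinom_ratio (τ η : ℂ) (ℓ : ℕ) (hη : ∀ n : ℕ, 1 ≤ n → n ≤ 2*ℓ → NN τ η n ≠ 0)
    (s : ℕ) (hs : s ≤ ℓ) :
    ebinom τ η ℓ s / ebinom τ η (2*ℓ) s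
      = ∏ j ∈ Finset.range s, (NN τ η (ℓ - j) / NN τ η (2*ℓ - j)) := by
  unfold ebinom
  rw [efact_eq_prod τ η ℓ s hs, efact_eq_prod τ η (2*ℓ) s (by omega),
    Finset.prod_div_distrib]
  have h1 : efact τ η s ≠ 0 := efact_ne τ η ℓ hη s (by omega)
  have h2 : efact τ η (ℓ - s) ≠ 0 := efact_ne τ η ℓ hη _ (by omega)
  have h3 : efact τ η (2*ℓ - s) ≠ 0 := efact_ne τ η ℓ hη _ (by omega)
  have h4 : (∏ j ∈ Finset.range s, NN τ η (2*ℓ - j)) ≠ 0 :=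
    Finset.prod_ne_zero_iff.mpr fun j hj => by
      have := Finset.mem_range.mp hj
      exact hη _ (by omega) (by omega)
  field_simp

lemma Apoly_key (τ η E : ℂ) (ℓ : ℕ) (hη : ∀ n : ℕ, 1 ≤ n → n ≤ 2*ℓ → NN τ η n ≠ 0) :
    ∀ s, s ≤ ℓ →
    Apoly τ η ℓ E s = (∏ j ∈ Finset.range s, (NN τ η (ℓ - j) / NN τ η (2*ℓ - j))) *
      (triM (fun _ => E)
        (fun k => theta1 τ (-2*((k:ℂ) + 1)*η) / theta1 τ (2*((ℓ:ℂ) - (k:ℂ))*η))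
        (fun k => theta1 τ (2*(2*(ℓ:ℂ) + 1 - (k:ℂ))*η) / theta1 τ (2*((ℓ:ℂ) - (k:ℂ))*η)) s).det := by
  intro s
  induction s using Nat.strong_induction_on with
  | _ s ih =>
    match s with
    | 0 => intro _; simp [Apoly, triM_det_zero]
    | 1 =>
      intro h1
      rw [Apoly, triM_det_one, Finset.prod_range_one]
      have e1 : en τ η ((ℓ:ℕ) : ℤ) = NN τ η ℓ := by
        unfold en NN; norm_num
      have e2 : en τ η (2*(ℓ:ℤ)) = NN τ η (2*ℓ) := by
        unfold en NN; norm_cast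
      rw [e1, e2]
      norm_num
    | (s + 2) =>
      intro h
      have ih1 := ih (s+1) (by omega) (by omega)
      have ih0 := ih s (by omega) (by omega)
      rw [Apoly, ih1, ih0, triM_det_rec]
      set D1 := (triM (fun _ => E)
        (fun k => theta1 τ (-2*((k:ℂ) + 1)*η) / theta1 τ (2*((ℓ:ℂ) - (k:ℂ))*η))
        (fun k => theta1 τ (2*(2*(ℓ:ℂ) + 1 - (k:ℂ))*η) / theta1 τ (2*((ℓ:ℂ) - (k:ℂ))*η))
        (s+1)).det with hD1
      set D0 := (triM (fun _ => E)
        (fun k => theta1 τ (-2*((k:ℂ) + 1)*η) / theta1 τ (2*((ℓ:ℂ) - (k:ℂ))*η))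
        (fun k => theta1 τ (2*(2*(ℓ:ℂ) + 1 - (k:ℂ))*η) / theta1 τ (2*((ℓ:ℂ) - (k:ℂ))*η))
        s).det with hD0
      set p := ℓ - (s+2) with hp
      set q := 2*ℓ - (s+2) with hq
      have hℓ : ℓ = p + (s+2) := by omega
      have h2ℓ' : 2*ℓ = q + (s+2) := by omega
      have hpC : (ℓ:ℂ) = (p:ℂ) + (s:ℂ) + 2 := by
        have h' := congrArg (fun n : ℕ => (n:ℂ)) hℓ
        push_cast at h'
        linear_combination h'
      have hqC : 2*(ℓ:ℂ) = (q:ℂ) + (s:ℂ) + 2 := by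
        have h' := congrArg (fun n : ℕ => (n:ℂ)) h2ℓ'
        push_cast at h'
        linear_combination h'
      -- en values
      have eA : en τ η ((ℓ:ℤ) - (↑s + 1)) = NN τ η (p+1) := by
        unfold en NN; congr 1; push_cast
        linear_combination (2*η) * hpC
      have eB : en τ η (2*(ℓ:ℤ) - (↑s + 1)) = NN τ η (q+1) := by
        unfold en NN; congr 1; push_cast
        linear_combination (2*η) * hqC
      have eC : en τ η ((s:ℤ) + 1) = NN τ η (s+1) := by
        unfold en NN; norm_cast
      rw [eA, eB, eC]
      -- b and c values
      have eb : theta1 τ (-2*((s:ℂ) + 1)*η) / theta1 τ (2*((ℓ:ℂ) - (s:ℂ))*η)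
          = - NN τ η (s+1) / NN τ η (p+2) := by
        have hodd : theta1 τ (-2*((s:ℂ) + 1)*η) = - NN τ η (s+1) := by
          have harg : (-2*((s:ℂ) + 1)*η) = -(2*(((s+1:ℕ)):ℂ)*η) := by push_cast; ring
          rw [harg, theta1_odd]; rfl
        have hden : theta1 τ (2*((ℓ:ℂ) - (s:ℂ))*η) = NN τ η (p+2) := by
          unfold NN; congr 1; push_cast
          linear_combination (2*η) * hpC
        rw [hodd, hden]
      have ec : theta1 τ (2*(2*(ℓ:ℂ) + 1 - ((s+1:ℕ):ℂ))*η) / theta1 τ (2*((ℓ:ℂ) - ((s+1:ℕ):ℂ))*η)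
          = NN τ η (q+2) / NN τ η (p+1) := by
        have hnum : theta1 τ (2*(2*(ℓ:ℂ) + 1 - ((s+1:ℕ):ℂ))*η) = NN τ η (q+2) := by
          unfold NN; congr 1; push_cast
          linear_combination (2*η) * hqC
        have hden : theta1 τ (2*((ℓ:ℂ) - ((s+1:ℕ):ℂ))*η) = NN τ η (p+1) := by
          unfold NN; congr 1; push_cast
          linear_combination (2*η) * hpC
        rw [hnum, hden]
      simp only [eb, ec]
      -- products
      rw [Finset.prod_range_succ, Finset.prod_range_succ, Finset.prod_range_succ]
      have g1 : ℓ - (s+1) = p+1 := by omega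
      have g2 : 2*ℓ - (s+1) = q+1 := by omega
      have g3 : ℓ - s = p+2 := by omega
      have g4 : 2*ℓ - s = q+2 := by omega
      rw [g1, g2, g3, g4]
      set QQ := ∏ j ∈ Finset.range s, (NN τ η (ℓ - j) / NN τ η (2*ℓ - j)) with hQQ
      have hp1 : NN τ η (p+1) ≠ 0 := hη _ (by omega) (by omega)
      have hp2 : NN τ η (p+2) ≠ 0 := hη _ (by omega) (by omega)
      have hq1 : NN τ η (q+1) ≠ 0 := hη _ (by omega) (by omega)
      have hq2 : NN τ η (q+2) ≠ 0 := hη _ (by omega) (by omega)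
      field_simp
      ring

/-- the tridiagonal determinant representation of A_{(ℓ−s)η}(E). -/
theorem Apoly_determinant_formula
    (τ : ℂ) (hτ : 0 < τ.im) (ℓ : ℕ) (hℓ : 0 < ℓ) (η : ℂ)
    (hη : ∀ n : ℕ, 1 ≤ n → n ≤ 2*ℓ → theta1 τ (2*(n : ℂ)*η) ≠ 0)
    (s : ℕ) (hs : s ≤ ℓ) (E : ℂ) :
    Apoly τ η ℓ E s
      = ebinom τ η ℓ s / ebinom τ η (2*ℓ) s *
        Matrix.det (Matrix.of fun i j : Fin s =>
          E * (if i = j then 1 else 0)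
          + theta1 τ (-2*(((i : ℕ) : ℂ) + 1)*η) / theta1 τ (2*((ℓ : ℂ) - ((i : ℕ) : ℂ))*η)
              * (if (j : ℕ) = (i : ℕ) + 1 then 1 else 0)
          + theta1 τ (2*(2*(ℓ : ℂ) + 1 - ((i : ℕ) : ℂ))*η)
              / theta1 τ (2*((ℓ : ℂ) - ((i : ℕ) : ℂ))*η)
              * (if (i : ℕ) = (j : ℕ) + 1 then 1 else 0)) := by
  have hη' : ∀ n : ℕ, 1 ≤ n → n ≤ 2*ℓ → NN τ η n ≠ 0 := fun n h1 h2 => hη n h1 h2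
  have hM : (Matrix.of fun i j : Fin s =>
          E * (if i = j then 1 else 0)
          + theta1 τ (-2*(((i : ℕ) : ℂ) + 1)*η) / theta1 τ (2*((ℓ : ℂ) - ((i : ℕ) : ℂ))*η)
              * (if (j : ℕ) = (i : ℕ) + 1 then 1 else 0)
          + theta1 τ (2*(2*(ℓ : ℂ) + 1 - ((i : ℕ) : ℂ))*η)
              / theta1 τ (2*((ℓ : ℂ) - ((i : ℕ) : ℂ))*η)
              * (if (i : ℕ) = (j : ℕ) + 1 then 1 else 0))
      = triM (fun _ => E)
        (fun k => theta1 τ (-2*((k:ℂ) + 1)*η) / theta1 τ (2*((ℓ:ℂ) - (k:ℂ))*η))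
        (fun k => theta1 τ (2*(2*(ℓ:ℂ) + 1 - (k:ℂ))*η) / theta1 τ (2*((ℓ:ℂ) - (k:ℂ))*η)) s := by
    ext i j
    rfl
  rw [Apoly_key τ η E ℓ hη' s hs, ebinom_ratio τ η ℓ hη' s hs]
  congr 1
end
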